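/- If p : (E,e₀) → (X,x₀) has the continuous path-covering property and H = p_#(π₁(E,e₀)), then the coset space π₁(X,x₀)/H, with the quotient topology inherited from the compact-open topology on Ω(X,x₀), is totally path-disconnected. -/
import Mathlib


open unitInterval Topology

/-- The space of paths in `X` starting at `x`, as a subspace of `C(I, X)`
with the compact-open topology. -/
abbrev PS (X : Type*) [TopologicalSpace X] (x : X) : Type _ := {f : C(I, X) // f 0 = x}

/-- The map on based path spaces induced by `p`. -/
def indMap {E X : Type*} [TopologicalSpace E] [TopologicalSpace X] (p : C(E, X)) (e : E) :
    PS E e → PS X (p e) :=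
  fun α => ⟨p.comp α.1, by simp [α.2]⟩

/-- `p` has the unique path-lifting property. -/
def UniquePathLifting {E X : Type*} [TopologicalSpace E] [TopologicalSpace X]
    (p : C(E, X)) : Prop :=
  ∀ e : E, Function.Injective (indMap p e)

/-- `p` has the path-covering property. -/
def PathCovering {E X : Type*} [TopologicalSpace E] [TopologicalSpace X]
    (p : C(E, X)) : Prop :=
  ∀ e : E, Function.Bijective (indMap p e)

/-- `p` has the continuous path-covering property. -/
def ContPathCovering {E X : Type*} [TopologicalSpace E] [TopologicalSpace X]
    (p : C(E, X)) : Prop :=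
  ∀ e : E, IsHomeomorph (indMap p e)

/-- A space is totally path-disconnected if every path in it is constant. -/
def TotallyPathDisconnected (Z : Type*) [TopologicalSpace Z] : Prop :=
  ∀ γ : C(I, Z), ∀ s t : I, γ s = γ t

/-- `p` has the homotopy lifting property with respect to `Z`. -/
def HLP {E X : Type*} [TopologicalSpace E] [TopologicalSpace X] (p : C(E, X))
    (Z : Type*) [TopologicalSpace Z] : Prop :=
  ∀ (f : C(Z, E)) (g : C(Z × I, X)), (∀ z, g (z, 0) = p (f z)) →
    ∃ G : C(Z × I, E), (∀ w, p (G w) = g w) ∧ ∀ z, G (z, 0) = f z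

section Aux
variable {E X : Type*} [TopologicalSpace E] [TopologicalSpace X] {p : C(E, X)}
  (hp : ContPathCovering p)

noncomputable def liftPS (e : E) : PS X (p e) → PS E e :=
  ((hp e).homeomorph _).symm

lemma liftPS_continuous (e : E) : Continuous (liftPS hp e) :=
  ((hp e).homeomorph _).continuous_invFun

lemma indMap_liftPS (e : E) (β : PS X (p e)) : indMap p e (liftPS hp e β) = β :=
  ((hp e).homeomorph _).apply_symm_apply β

lemma liftPS_indMap (e : E) (α : PS E e) : liftPS hp e (indMap p e α) = α :=
  ((hp e).homeomorph _).symm_apply_apply α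

lemma p_liftPS (e : E) (β : PS X (p e)) (t : I) :
    p ((liftPS hp e β).1 t) = β.1 t := by
  have h1 := indMap_liftPS hp e β
  have h2 : (indMap p e (liftPS hp e β)).1 t = β.1 t := by rw [h1]
  simpa [indMap] using h2

lemma liftPS_unique (e : E) (β : PS X (p e)) (c : C(I, E)) (hc0 : c 0 = e)
    (hc : ∀ t, p (c t) = β.1 t) : liftPS hp e β = ⟨c, hc0⟩ := by
  have h : indMap p e ⟨c, hc0⟩ = β := Subtype.ext (by ext t; simpa [indMap] using hc t)
  rw [← h, liftPS_indMap]
end Aux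
section Aux2
variable {E X : Type*} [TopologicalSpace E] [TopologicalSpace X] {p : C(E, X)}
  (hp : ContPathCovering p)
include hp

/-- Fibers of `p` are totally path-disconnected. -/
lemma fiber_tpd (c : C(I, E)) (x : X) (hc : ∀ s, p (c s) = x) (s t : I) : c s = c t := by
  suffices h : ∀ u : I, c u = c 0 by rw [h s, h t]
  intro u
  set e := c 0 with he
  have hx : x = p e := (hc 0).symm
  let d : C(I, E) := c.comp ⟨fun v => v * u, (continuous_subtype_val.mul continuous_const).subtype_mk _⟩
  have hd0 : d 0 = e := by
    show c (0 * u) = c 0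
    congr 1
    exact Subtype.ext (by simp)
  let β : PS X (p e) := ⟨ContinuousMap.const I (p e), rfl⟩
  have h1 : liftPS hp e β = ⟨d, hd0⟩ :=
    liftPS_unique hp e β d hd0 (fun t => by
      show p (c (t * u)) = p e
      rw [← hx]; exact hc _)
  have h2 : liftPS hp e β = ⟨ContinuousMap.const I e, rfl⟩ :=
    liftPS_unique hp e β (ContinuousMap.const I e) rfl (fun _ => rfl)
  have h3 : d 1 = e := by
    have := h1.symm.trans h2
    have := congrArg (fun q : PS E e => q.1 1) this
    simpa using this
  have : d 1 = c u := by
    show c (1 * u) = c u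
    congr 1
    exact Subtype.ext (by simp)
  rw [← this, h3]

/-- endpoint of the lift -/
noncomputable def ep (e : E) (β : PS X (p e)) : E := (liftPS hp e β).1 1

noncomputable def epP (e : E) {x : X} (η : Path (p e) x) : E :=
  ep hp e ⟨η.toContinuousMap, η.source⟩

/-- the lift as a path -/
noncomputable def liftPath (e : E) {x : X} (η : Path (p e) x) :
    Path e (epP hp e η) where
  toContinuousMap := (liftPS hp e ⟨η.toContinuousMap, η.source⟩).1
  source' := (liftPS hp e ⟨η.toContinuousMap, η.source⟩).2
  target' := rfl

lemma liftPath_lifts (e : E) {x : X} (η : Path (p e) x) (t : I) :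
    p (liftPath hp e η t) = η t :=
  p_liftPS hp e ⟨η.toContinuousMap, η.source⟩ t

lemma liftPath_unique (e : E) {x : X} (η : Path (p e) x) {a : E} (γ : Path e a)
    (h : ∀ t, p (γ t) = η t) : ∀ t, liftPath hp e η t = γ t := by
  intro t
  have := liftPS_unique hp e ⟨η.toContinuousMap, η.source⟩ γ.toContinuousMap γ.source'
    (fun t => h t)
  calc liftPath hp e η t = (liftPS hp e ⟨η.toContinuousMap, η.source⟩).1 t := rfl
    _ = γ.toContinuousMap t := by rw [this]
    _ = γ t := rfl

lemma p_epP (e : E) {x : X} (η : Path (p e) x) : p (epP hp e η) = x := by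
  have := liftPath_lifts hp e η 1
  simpa [liftPath, epP, ep] using (p_liftPS hp e ⟨η.toContinuousMap, η.source⟩ 1).trans η.target

end Aux2
section Aux3
variable {E X : Type*} [TopologicalSpace E] [TopologicalSpace X] {p : C(E, X)}
  (hp : ContPathCovering p)
include hp

/-- Homotopic paths have lifts with the same endpoint. -/
lemma epP_htpy (e : E) {x₁ : X} (η₀ η₁ : Path (p e) x₁) (h : η₀.Homotopic η₁) :
    epP hp e η₀ = epP hp e η₁ := by
  obtain ⟨F⟩ := h
  have hK0 : ∀ s : I, F.toContinuousMap.curry s 0 = p e := by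
    intro s
    show F (s, 0) = p e
    simp
  let K : I → PS X (p e) := fun s => ⟨F.toContinuousMap.curry s, hK0 s⟩
  have hKc : Continuous K :=
    Continuous.subtype_mk (F.toContinuousMap.curry.continuous) _
  let c : C(I, E) := ⟨fun s => (liftPS hp e (K s)).1 1,
    (ContinuousEvalConst.continuous_eval_const 1).comp
      (continuous_subtype_val.comp ((liftPS_continuous hp e).comp hKc))⟩
  have hc : ∀ s, p (c s) = x₁ := by
    intro s
    have h1 := p_liftPS hp e (K s) 1
    have h2 : (K s).1 1 = x₁ := by
      show F (s, 1) = x₁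
      simp
    exact h1.trans h2
  have h01 : c 0 = c 1 := fiber_tpd hp c x₁ hc 0 1
  have e0 : K 0 = ⟨η₀.toContinuousMap, η₀.source⟩ := by
    apply Subtype.ext
    ext t
    exact F.apply_zero t
  have e1 : K 1 = ⟨η₁.toContinuousMap, η₁.source⟩ := by
    apply Subtype.ext
    ext t
    exact F.apply_one t
  have c0 : c 0 = epP hp e η₀ := by
    show (liftPS hp e (K 0)).1 1 = _
    rw [e0]; rfl
  have c1 : c 1 = epP hp e η₁ := by
    show (liftPS hp e (K 1)).1 1 = _
    rw [e1]; rfl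
  rw [← c0, ← c1, h01]

/-- Endpoint of lift of a concatenation. -/
lemma epP_trans (e : E) {x y : X} (η : Path (p e) x) (θ : Path x y) :
    epP hp e (η.trans θ) =
      epP hp (epP hp e η)
        ⟨θ.toContinuousMap, θ.source'.trans (p_epP hp e η).symm, θ.target'⟩ := by
  set a := epP hp e η with ha
  set θ' : Path (p a) y := ⟨θ.toContinuousMap, θ.source'.trans (p_epP hp e η).symm, θ.target'⟩
    with hθ'
  have key : ∀ t, p (((liftPath hp e η).trans (liftPath hp a θ')) t) = (η.trans θ) t := by
    intro t
    rw [Path.trans_apply, Path.trans_apply]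
    split_ifs with h
    · exact liftPath_lifts hp e η _
    · exact liftPath_lifts hp a θ' _
  have := liftPath_unique hp e (η.trans θ) ((liftPath hp e η).trans (liftPath hp a θ')) key 1
  calc epP hp e (η.trans θ) = liftPath hp e (η.trans θ) 1 := rfl
    _ = ((liftPath hp e η).trans (liftPath hp a θ')) 1 := this
    _ = epP hp a θ' := Path.target _

end Aux3
section Main
variable {E X : Type*} [TopologicalSpace E] [TopologicalSpace X] {p : C(E, X)}
  (hp : ContPathCovering p)
include hp

lemma epP_map (e : E) (γ : Path e e) : epP hp e (γ.map p.continuous) = e := by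
  have := liftPath_unique hp e (γ.map p.continuous) γ (fun t => rfl) 1
  calc epP hp e (γ.map p.continuous) = liftPath hp e (γ.map p.continuous) 1 := rfl
    _ = γ 1 := this
    _ = e := γ.target

lemma ep_trans_eq (e₀ : E) (A B : Path (p e₀) (p e₀))
    (h : epP hp e₀ (A.trans B.symm) = e₀) : epP hp e₀ A = epP hp e₀ B := by
  set a := epP hp e₀ A with ha
  set S : Path (p a) (p e₀) :=
    ⟨B.symm.toContinuousMap, B.symm.source'.trans (p_epP hp e₀ A).symm, B.symm.target'⟩ with hS
  have htr := epP_trans hp e₀ A B.symm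
  have hSa : epP hp a S = e₀ := by rw [← htr]; exact h
  set liftS := liftPath hp a S with hls
  let γ2 : Path e₀ a := ⟨liftS.symm.toContinuousMap, liftS.symm.source'.trans hSa,
    liftS.symm.target'⟩
  have hγ2 : ∀ t, p (γ2 t) = B t := by
    intro t
    show p (liftS (σ t)) = B t
    have hl := liftPath_lifts hp a S (σ t)
    rw [hl]
    show B (σ (σ t)) = B t
    rw [symm_symm]
  have hu := liftPath_unique hp e₀ B γ2 hγ2 1
  have hcalc : epP hp e₀ B = a := calc
    epP hp e₀ B = liftPath hp e₀ B 1 := rfl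
    _ = γ2 1 := hu
    _ = liftS.symm 1 := rfl
    _ = a := liftS.symm.target
  exact hcalc.symm

lemma ep_inj_step (e₀ : E) (A B : Path (p e₀) (p e₀)) (h : epP hp e₀ A = epP hp e₀ B) :
    ∃ γ : Path e₀ e₀, (γ.map p.continuous).Homotopic (A.trans B.symm) := by
  let liftA := liftPath hp e₀ A
  let liftB' : Path e₀ (epP hp e₀ A) := ⟨(liftPath hp e₀ B).toContinuousMap,
    (liftPath hp e₀ B).source', (liftPath hp e₀ B).target'.trans h.symm⟩
  refine ⟨liftA.trans liftB'.symm, ?_⟩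
  have heq : (liftA.trans liftB'.symm).map p.continuous = A.trans B.symm := by
    apply Path.ext
    funext t
    show p ((liftA.trans liftB'.symm) t) = (A.trans B.symm) t
    rw [Path.trans_apply, Path.trans_apply]
    split_ifs with ht
    · exact liftPath_lifts hp e₀ A _
    · show p (liftPath hp e₀ B (σ _)) = B (σ _)
      exact liftPath_lifts hp e₀ B _
  rw [heq]

lemma ep_wd (e₀ : E) (A B : Path (p e₀) (p e₀))
    (h : ∃ γ : Path e₀ e₀, (γ.map p.continuous).Homotopic (A.trans B.symm)) :
    epP hp e₀ A = epP hp e₀ B := by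
  obtain ⟨γ, hγ⟩ := h
  have h1 : epP hp e₀ (A.trans B.symm) = e₀ := by
    rw [← epP_htpy hp e₀ _ _ hγ]
    exact epP_map hp e₀ γ
  exact ep_trans_eq hp e₀ A B h1

end Main

/-- If `p : (E,e₀) → (X, x₀)` has the continuous path-covering property and
`H = p_#(π₁(E,e₀))`, then the coset space `π₁(X,x₀)/H`, realized as the quotient
of the loop space `Ω(X,x₀)` (compact-open topology) by the relation
`α ≈ β ↔ [α·β⁻] ∈ p_#(π₁(E,e₀))`, is totally path-disconnected. -/
theorem stmt17 {E X : Type*} [TopologicalSpace E] [TopologicalSpace X] [T2Space X]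
    [PathConnectedSpace X] (p : C(E, X)) (hp : ContPathCovering p) (e₀ : E) :
    TotallyPathDisconnected (Quot (fun α β : {f : C(I, X) // f 0 = p e₀ ∧ f 1 = p e₀} =>
      ∃ γ : Path e₀ e₀, (γ.map p.continuous).Homotopic
        ((⟨α.1, α.2.1, α.2.2⟩ : Path (p e₀) (p e₀)).trans
          (⟨β.1, β.2.1, β.2.2⟩ : Path (p e₀) (p e₀)).symm))) := by
  let r := fun α β : {f : C(I, X) // f 0 = p e₀ ∧ f 1 = p e₀} =>
      ∃ γ : Path e₀ e₀, (γ.map p.continuous).Homotopic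
        ((⟨α.1, α.2.1, α.2.2⟩ : Path (p e₀) (p e₀)).trans
          (⟨β.1, β.2.1, β.2.2⟩ : Path (p e₀) (p e₀)).symm)
  show TotallyPathDisconnected (Quot r)
  intro c s t
  let f : {f : C(I, X) // f 0 = p e₀ ∧ f 1 = p e₀} → E :=
    fun α => epP hp e₀ ⟨α.1, α.2.1, α.2.2⟩
  have hwd : ∀ a b, r a b → f a = f b := fun a b hab => ep_wd hp e₀ _ _ hab
  let F : Quot r → E := Quot.lift f hwd
  have hfc : Continuous f := by
    show Continuous fun α : {f : C(I, X) // f 0 = p e₀ ∧ f 1 = p e₀} =>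
      (liftPS hp e₀ ⟨α.1, (⟨α.1, α.2.1, α.2.2⟩ : Path (p e₀) (p e₀)).source⟩).1 1
    exact (ContinuousEvalConst.continuous_eval_const 1).comp (continuous_subtype_val.comp
      ((liftPS_continuous hp e₀).comp (Continuous.subtype_mk continuous_subtype_val _)))
  have hFc : Continuous F := continuous_quot_lift hwd hfc
  have hfib : ∀ z, p (F z) = p e₀ := by
    apply Quot.ind
    intro α
    exact p_epP hp e₀ ⟨α.1, α.2.1, α.2.2⟩
  let c' : C(I, E) := ⟨fun u => F (c u), hFc.comp c.continuous⟩
  have h1 : c' s = c' t := fiber_tpd hp c' (p e₀) (fun u => hfib (c u)) s t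
  have hinj : ∀ z w : Quot r, F z = F w → z = w := by
    intro z w
    induction z using Quot.ind with
    | _ a =>
    induction w using Quot.ind with
    | _ b =>
    intro hab
    exact Quot.sound (ep_inj_step hp e₀ _ _ hab)
  exact hinj _ _ h1
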